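/- Let F be in the class ℬ with Taylor expansion F(z) = ∑_{k=0}^∞ b_k z^k. Then for every r with 0 ≤ r ≤ 1/√3, one has ∑_{k=3}^∞ k² |b_k|² r^{2(k−1)} ≤ 9 r⁴ · (9/4 − |b₁|² − (4/3)|b₂|²). -/

import Mathlib

open Metric MeasureTheory

noncomputable section BlochAux

namespace BlochAux


lemma norm_fourier_apply {T : ℝ} (n : ℤ) (x : AddCircle T) : ‖fourier n x‖ = 1 := by
  simp [fourier_apply, Circle.norm_coe]

lemma integral_fourier {T : ℝ} [hT : Fact (0 < T)] (n : ℤ) :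
    ∫ x : AddCircle T, fourier n x ∂AddCircle.haarAddCircle
      = if n = 0 then 1 else 0 := by
  have h := (orthonormal_iff_ite.mp (@orthonormal_fourier T hT)) 0 n
  rw [ContinuousMap.inner_toLp (@AddCircle.haarAddCircle T hT) (fourier 0) (fourier n)] at h
  simp only [fourier_zero, map_one, one_mul, mul_one] at h
  rw [h]
  simp [eq_comm]

lemma fourierCoeff_of_hasSum {T : ℝ} [hT : Fact (0 < T)] (a : ℕ → ℂ)
    (ha : Summable fun k => ‖a k‖) (G : C(AddCircle T, ℂ))
    (hG : ∀ x, HasSum (fun k : ℕ => a k * fourier (k : ℤ) x) (G x)) (n : ℕ) :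
    fourierCoeff (⇑G) (n : ℤ) = a n := by
  have hnorm : ∀ (k : ℕ) (t : AddCircle T),
      ‖fourier (-(n:ℤ)) t * (a k * fourier (k:ℤ) t)‖ = ‖a k‖ := by
    intro k t
    rw [norm_mul, norm_mul, norm_fourier_apply, norm_fourier_apply, one_mul, mul_one]
  have hmeas : ∀ k : ℕ, AEStronglyMeasurable
      (fun t : AddCircle T => fourier (-(n:ℤ)) t * (a k * fourier (k : ℤ) t))
      AddCircle.haarAddCircle := fun k =>
    (((map_continuous (fourier (-(n:ℤ)))).mul
      (continuous_const.mul (map_continuous (fourier (k:ℤ)))))).aestronglyMeasurable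
  have hlin : ∑' k : ℕ, ∫⁻ t : AddCircle T, ‖fourier (-(n:ℤ)) t * (a k * fourier (k:ℤ) t)‖₊
      ∂AddCircle.haarAddCircle ≠ ⊤ := by
    have h1 : ∀ k : ℕ, ∫⁻ t : AddCircle T, ‖fourier (-(n:ℤ)) t * (a k * fourier (k:ℤ) t)‖₊
        ∂AddCircle.haarAddCircle = (‖a k‖₊ : ENNReal) := by
      intro k
      have : ∀ t : AddCircle T, (‖fourier (-(n:ℤ)) t * (a k * fourier (k:ℤ) t)‖₊ : ENNReal)
          = (‖a k‖₊ : ENNReal) := by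
        intro t
        congr 1
        ext
        exact hnorm k t
      simp_rw [this]
      simp
    simp_rw [h1]
    rw [ENNReal.tsum_coe_ne_top_iff_summable_coe]
    simpa [coe_nnnorm] using ha
  have key : ∀ t : AddCircle T, fourier (-(n:ℤ)) t • G t
      = ∑' k : ℕ, fourier (-(n:ℤ)) t * (a k * fourier (k:ℤ) t) := by
    intro t
    rw [smul_eq_mul]
    exact ((hG t).mul_left _).tsum_eq.symm
  unfold fourierCoeff
  simp_rw [key]
  rw [integral_tsum hmeas hlin]
  have hint : ∀ k : ℕ, ∫ t : AddCircle T, fourier (-(n:ℤ)) t * (a k * fourier (k:ℤ) t)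
      ∂AddCircle.haarAddCircle = if k = n then a k else 0 := by
    intro k
    have h2 : ∀ t : AddCircle T, fourier (-(n:ℤ)) t * (a k * fourier (k:ℤ) t)
        = a k * fourier ((k:ℤ) + -(n:ℤ)) t := by
      intro t
      rw [fourier_add]
      ring
    simp_rw [h2, integral_const_mul, integral_fourier]
    by_cases h : k = n
    · simp [h]
    · rw [if_neg, if_neg h, mul_zero]
      intro hc
      have : (k : ℤ) = (n : ℤ) := by omega
      exact h (by exact_mod_cast this)
  simp_rw [hint]
  rw [tsum_eq_single n (fun k hk => by rw [if_neg hk])]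
  simp




lemma fourier_natCast_eq_pow {T : ℝ} (k : ℕ) (x : AddCircle T) :
    fourier (k : ℤ) x = (fourier 1 x) ^ k := by
  induction k with
  | zero => simpa using fourier_zero
  | succ n ih =>
      have h : ((n + 1 : ℕ) : ℤ) = (n : ℤ) + 1 := by push_cast; ring
      rw [h, fourier_add, ih, pow_succ]

lemma parseval_bound {T : ℝ} [hT : Fact (0 < T)] (a : ℕ → ℂ)
    (ha : Summable fun k => ‖a k‖) (G : C(AddCircle T, ℂ))
    (hG : ∀ x, HasSum (fun k : ℕ => a k * fourier (k : ℤ) x) (G x))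
    (M : ℝ) (hM : ∀ x, ‖G x‖ ≤ M) :
    ∑' k : ℕ, ‖a k‖ ^ 2 ≤ M ^ 2 := by
  set μ := @AddCircle.haarAddCircle T hT with hμ
  set g : Lp ℂ 2 μ := ContinuousMap.toLp (E := ℂ) 2 μ ℂ G with hg
  have hae : ⇑g =ᵐ[μ] ⇑G := ContinuousMap.coeFn_toLp μ G
  have hcoeff : ∀ i : ℤ, fourierCoeff (⇑g) i = fourierCoeff (⇑G) i := by
    intro i
    unfold fourierCoeff
    apply integral_congr_ae
    filter_upwards [hae] with t ht
    rw [ht]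
  have hsum : Summable fun i : ℤ => ‖fourierCoeff (⇑g) i‖ ^ 2 := by
    have h2 := (@orthonormal_fourier T hT).inner_products_summable (x := g)
    refine h2.congr fun i => ?_
    rw [← fourierBasis_repr, fourierBasis.repr_apply_apply, coe_fourierBasis]
  have hint : ∫ t : AddCircle T, ‖g t‖ ^ 2 ∂μ ≤ M ^ 2 := by
    have hbd : ∀ᵐ t ∂μ, ‖‖g t‖ ^ 2‖ ≤ M ^ 2 := by
      filter_upwards [hae] with t ht
      rw [ht, Real.norm_eq_abs, abs_of_nonneg (sq_nonneg _)]
      exact pow_le_pow_left₀ (norm_nonneg _) (hM t) 2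
    calc ∫ t : AddCircle T, ‖g t‖ ^ 2 ∂μ ≤ ‖∫ t : AddCircle T, ‖g t‖ ^ 2 ∂μ‖ := le_abs_self _
      _ ≤ M ^ 2 * (μ Set.univ).toReal := norm_integral_le_of_norm_le_const hbd
      _ = M ^ 2 := by simp [hμ]
  have hN : ∀ k : ℕ, fourierCoeff (⇑g) (k : ℤ) = a k := fun k =>
    (hcoeff k).trans (fourierCoeff_of_hasSum a ha G hG k)
  have hinj : Function.Injective (fun k : ℕ => (k : ℤ)) := fun x y h => Int.ofNat_inj.mp h
  have hsumN : Summable fun k : ℕ => ‖a k‖ ^ 2 := by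
    have := hsum.comp_injective hinj
    refine this.congr fun k => ?_
    simp only [Function.comp_apply, hN k]
  calc ∑' k : ℕ, ‖a k‖ ^ 2 ≤ ∑' i : ℤ, ‖fourierCoeff (⇑g) i‖ ^ 2 := by
        refine Summable.tsum_le_tsum_of_inj (fun k : ℕ => (k : ℤ)) hinj
          (fun c _ => sq_nonneg _) (fun k => by rw [hN k]) hsumN hsum
      _ = ∫ t : AddCircle T, ‖g t‖ ^ 2 ∂μ := tsum_sq_fourierCoeff g
      _ ≤ M ^ 2 := hint


lemma hasSum_deriv (F : ℂ → ℂ) (b : ℕ → ℂ)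
    (hb : ∀ z ∈ ball (0:ℂ) 1, HasSum (fun k : ℕ => b k * z ^ k) (F z))
    (y : ℂ) (hy : y ∈ ball (0:ℂ) 1) (hy0 : y ≠ 0) :
    HasSum (fun k : ℕ => ((k + 1 : ℕ) : ℂ) * b (k + 1) * y ^ k) (deriv F y) := by
  set p := FormalMultilinearSeries.ofScalars ℂ b with hp
  have hpn : ∀ n, ‖p n‖ = ‖b n‖ := fun n => FormalMultilinearSeries.ofScalars_norm (𝕜 := ℂ) ℂ b n
  have hrad : 1 ≤ p.radius := by
    refine ENNReal.le_of_forall_nnreal_lt fun s hs => ?_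
    have hs1 : (s : ℝ) < 1 := by exact_mod_cast hs
    have hmem : ((s : ℝ) : ℂ) ∈ ball (0:ℂ) 1 := by
      rw [mem_ball_zero_iff, Complex.norm_real, Real.norm_eq_abs, NNReal.abs_eq s]
      exact hs1
    have hsum := (hb _ hmem).summable
    have ht : Filter.Tendsto (fun n : ℕ => ‖p n‖ * (s : ℝ) ^ n) Filter.atTop (nhds 0) := by
      have h0 := hsum.tendsto_atTop_zero.norm
      simp only [norm_zero] at h0
      refine h0.congr fun n => ?_
      rw [norm_mul, norm_pow, Complex.norm_real, Real.norm_eq_abs, NNReal.abs_eq s, hpn]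
      
    exact p.le_radius_of_tendsto ht
  have hps : HasFPowerSeriesOnBall F p 0 1 :=
    { r_le := hrad
      r_pos := one_pos
      hasSum := by
        intro z hz
        rw [EMetric.mem_ball, edist_zero_right] at hz
        have hz' : z ∈ ball (0:ℂ) 1 := by
          rw [mem_ball_zero_iff]
          rw [enorm_eq_nnnorm] at hz
          exact_mod_cast hz
        rw [zero_add]
        have heq : (fun n : ℕ => p n fun _ => z) = fun n : ℕ => b n * z ^ n := by
          funext n
          rw [hp, FormalMultilinearSeries.ofScalars_apply_eq, smul_eq_mul]
        rw [heq]
        exact hb z hz' }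
  have hd := hps.fderiv
  have hmem : y ∈ Metric.eball (0:ℂ) 1 := by
    rw [EMetric.mem_ball, edist_zero_right, enorm_eq_nnnorm]
    exact_mod_cast mem_ball_zero_iff.mp hy
  have h1 := hd.hasSum hmem
  have h2 := (ContinuousLinearMap.apply ℂ ℂ y).hasSum h1
  simp only [ContinuousLinearMap.apply_apply] at h2
  have h3 : ∀ n : ℕ, (p.derivSeries n fun _ => y) y = ((n + 1 : ℕ) : ℂ) * b (n + 1) * y ^ (n + 1) := by
    intro n
    rw [p.derivSeries_apply_diag, FormalMultilinearSeries.ofScalars_apply_eq]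
    push_cast
    simp only [smul_eq_mul, nsmul_eq_mul]
    push_cast
    ring
  have h4 : (fderiv ℂ F (0 + y)) y = y * deriv F y := by
    rw [zero_add]
    have hms := (fderiv ℂ F y).map_smul y (1:ℂ)
    simp only [smul_eq_mul, mul_one] at hms
    rw [hms, fderiv_apply_one_eq_deriv]
  simp only [h3, h4] at h2
  have h5 := h2.mul_left y⁻¹
  have hterm : ∀ n : ℕ, y⁻¹ * (((n + 1 : ℕ) : ℂ) * b (n + 1) * y ^ (n + 1))
      = ((n + 1 : ℕ) : ℂ) * b (n + 1) * y ^ n := by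
    intro n
    rw [pow_succ]
    field_simp
  have hval : y⁻¹ * (y * deriv F y) = deriv F y := by field_simp
  rw [hval] at h5
  simp only [hterm] at h5
  exact h5


end BlochAux

end BlochAux

open Metric BlochAux

set_option maxHeartbeats 2000000 in
theorem bloch_tail_from_three
    (F : ℂ → ℂ) (b : ℕ → ℂ)
    (hF : DifferentiableOn ℂ F (ball (0:ℂ) 1))
    (hderiv : ∀ z ∈ ball (0:ℂ) 1, ‖deriv F z‖ ≤ 1 / (1 - ‖z‖ ^ 2))
    (hb : ∀ z ∈ ball (0:ℂ) 1, HasSum (fun k : ℕ => b k * z ^ k) (F z))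
    (r : ℝ) (hr0 : 0 ≤ r) (hr1 : r ≤ 1 / Real.sqrt 3) :
    ∑' k : ℕ, ((k + 3 : ℕ) : ℝ) ^ 2 * ‖b (k + 3)‖ ^ 2 * r ^ (2 * (k + 2))
      ≤ 9 * r ^ 4 * (9 / 4 - ‖b 1‖ ^ 2 - 4 / 3 * ‖b 2‖ ^ 2) := by
  classical
  haveI : Fact ((0:ℝ) < 1) := ⟨one_pos⟩
  set ρ : ℝ := (Real.sqrt 3)⁻¹ with hρdef
  have h3 : (0:ℝ) < Real.sqrt 3 := Real.sqrt_pos.mpr (by norm_num)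
  have hρpos : 0 < ρ := inv_pos.mpr h3
  have hρsq : ρ ^ 2 = 1 / 3 := by
    rw [hρdef, ← one_div, div_pow, one_pow, Real.sq_sqrt (by norm_num : (0:ℝ) ≤ 3)]
  have hρlt1 : ρ < 1 := by nlinarith
  have hrρ : r ≤ ρ := by rw [hρdef, ← one_div]; exact hr1
  set c : ℕ → ℂ := fun k => ((k + 1 : ℕ) : ℂ) * b (k + 1) with hcdef
  set a : ℕ → ℂ := fun k => c k * ((ρ : ℝ) : ℂ) ^ k with hadef
  -- Summability of the coefficients
  have hmem45 : ((4/5 : ℝ) : ℂ) ∈ ball (0:ℂ) 1 := by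
    rw [mem_ball_zero_iff, Complex.norm_real, Real.norm_eq_abs,
      abs_of_nonneg (by norm_num : (0:ℝ) ≤ 4/5)]
    norm_num
  have htend : Filter.Tendsto (fun k : ℕ => ‖b k‖ * (4/5 : ℝ) ^ k) Filter.atTop (nhds 0) := by
    have h0 := (hb _ hmem45).summable.tendsto_atTop_zero.norm
    simp only [norm_zero] at h0
    refine h0.congr fun k => ?_
    rw [norm_mul, norm_pow, Complex.norm_real, Real.norm_eq_abs,
      abs_of_nonneg (by norm_num : (0:ℝ) ≤ 4/5)]
  obtain ⟨C, hC⟩ := htend.bddAbove_range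
  simp only [mem_upperBounds] at hC
  have hC' : ∀ k : ℕ, ‖b k‖ * (4/5 : ℝ) ^ k ≤ C := fun k => hC _ (Set.mem_range_self k)
  have hC0 : 0 ≤ C := le_trans (by positivity) (hC' 0)
  set t : ℝ := (5/4) * ρ with htdef
  have ht0 : 0 ≤ t := by positivity
  have ht1 : t < 1 := by nlinarith
  have hmaj : Summable fun k : ℕ => C * (5/4) * (((k : ℝ) + 1) * t ^ k) := by
    refine Summable.mul_left _ ?_
    have h1 : Summable fun k : ℕ => (k : ℝ) ^ 1 * t ^ k :=
      summable_pow_mul_geometric_of_norm_lt_one 1 (by rwa [Real.norm_eq_abs, abs_of_nonneg ht0])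
    have h2 : Summable fun k : ℕ => t ^ k := summable_geometric_of_lt_one ht0 ht1
    refine (h1.add h2).congr fun k => ?_
    ring
  have ha : Summable fun k => ‖a k‖ := by
    refine Summable.of_nonneg_of_le (fun k => norm_nonneg _) (fun k => ?_) hmaj
    have hbk : ‖b (k + 1)‖ ≤ C * (5/4) ^ (k + 1) := by
      have h45 : (0:ℝ) < (4/5 : ℝ) ^ (k + 1) := by positivity
      have := hC' (k + 1)
      rw [← le_div_iff₀ h45] at this
      refine this.trans (le_of_eq ?_)
      rw [div_eq_mul_inv, ← inv_pow]
      norm_num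
    have hnorm : ‖a k‖ = ((k : ℝ) + 1) * ‖b (k + 1)‖ * ρ ^ k := by
      rw [hadef]
      simp only [norm_mul, norm_pow, Complex.norm_natCast, Complex.norm_real,
        Real.norm_eq_abs, abs_of_pos hρpos, hcdef]
      push_cast
      ring
    rw [hnorm]
    have hpow : (5/4 : ℝ) ^ (k + 1) * ρ ^ k = (5/4) * t ^ k := by
      rw [htdef, mul_pow, pow_succ]
      ring
    calc ((k : ℝ) + 1) * ‖b (k + 1)‖ * ρ ^ k
        ≤ ((k : ℝ) + 1) * (C * (5/4) ^ (k + 1)) * ρ ^ k := by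
          gcongr
      _ = C * (5/4) * (((k : ℝ) + 1) * t ^ k) := by
          linear_combination ((k : ℝ) + 1) * C * hpow
  -- the boundary function
  have hcont : ContinuousOn (deriv F) (ball (0:ℂ) 1) :=
    ((hF.analyticOnNhd isOpen_ball).deriv).continuousOn
  have hzc : Continuous fun x : AddCircle (1:ℝ) => ((ρ:ℝ):ℂ) * fourier 1 x :=
    continuous_const.mul (map_continuous (fourier 1))
  have hznorm : ∀ x : AddCircle (1:ℝ), ‖((ρ:ℝ):ℂ) * fourier 1 x‖ = ρ := by
    intro x
    rw [norm_mul, Complex.norm_real, Real.norm_eq_abs, abs_of_pos hρpos,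
      norm_fourier_apply, mul_one]
  have hzmem : ∀ x : AddCircle (1:ℝ), ((ρ:ℝ):ℂ) * fourier 1 x ∈ ball (0:ℂ) 1 := by
    intro x; rw [mem_ball_zero_iff, hznorm]; exact hρlt1
  have hzne : ∀ x : AddCircle (1:ℝ), ((ρ:ℝ):ℂ) * fourier 1 x ≠ 0 := by
    intro x h
    have h2 := hznorm x
    rw [h, norm_zero] at h2
    exact absurd h2.symm (ne_of_gt hρpos)
  set G : C(AddCircle (1:ℝ), ℂ) :=
    ⟨fun x => deriv F (((ρ:ℝ):ℂ) * fourier 1 x), hcont.comp_continuous hzc hzmem⟩ with hGdef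
  have hGsum : ∀ x, HasSum (fun k : ℕ => a k * fourier (k:ℤ) x) (G x) := by
    intro x
    have h := hasSum_deriv F b hb _ (hzmem x) (hzne x)
    have he : ∀ k : ℕ, ((k + 1 : ℕ) : ℂ) * b (k + 1) * ((((ρ:ℝ)):ℂ) * fourier 1 x) ^ k
        = a k * fourier (k:ℤ) x := by
      intro k
      rw [fourier_natCast_eq_pow, hadef, hcdef, mul_pow]
      ring
    simp only [he] at h
    exact h
  have hM : ∀ x, ‖G x‖ ≤ 3/2 := by
    intro x
    have h := hderiv _ (hzmem x)
    rw [hznorm x, hρsq] at h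
    have h32 : (1:ℝ)/(1 - 1/3) = 3/2 := by norm_num
    rw [h32] at h
    exact h
  have hpar : ∑' k : ℕ, ‖a k‖ ^ 2 ≤ 9/4 := by
    have h := parseval_bound a ha G hGsum (3/2) hM
    have h94 : ((3:ℝ)/2) ^ 2 = 9/4 := by norm_num
    rwa [h94] at h
  -- summability of the squares and splitting
  have hsq : Summable fun k : ℕ => ‖a k‖ ^ 2 := by
    obtain ⟨C2, hC2⟩ := ha.tendsto_atTop_zero.bddAbove_range
    simp only [mem_upperBounds] at hC2
    refine Summable.of_nonneg_of_le (fun k => sq_nonneg _) (fun k => ?_) (ha.mul_left C2)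
    rw [sq]
    exact mul_le_mul_of_nonneg_right (hC2 _ (Set.mem_range_self k)) (norm_nonneg _)
  have hsq1 : Summable fun k : ℕ => ‖a (k + 1)‖ ^ 2 :=
    (summable_nat_add_iff 1).mpr hsq
  have hsq2 : Summable fun k : ℕ => ‖a (k + 1 + 1)‖ ^ 2 :=
    (summable_nat_add_iff 1).mpr hsq1
  have hsplit : ∑' k : ℕ, ‖a k‖ ^ 2
      = ‖a 0‖ ^ 2 + ‖a 1‖ ^ 2 + ∑' k : ℕ, ‖a (k + 1 + 1)‖ ^ 2 := by
    rw [Summable.tsum_eq_zero_add hsq, Summable.tsum_eq_zero_add hsq1]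
    ring
  have ha0 : ‖a 0‖ ^ 2 = ‖b 1‖ ^ 2 := by
    have h1 : a 0 = b 1 := by simp [hadef, hcdef]
    rw [h1]
  have ha1 : ‖a 1‖ ^ 2 = 4/3 * ‖b 2‖ ^ 2 := by
    have h1 : a 1 = ((2:ℕ):ℂ) * b 2 * ((ρ:ℝ):ℂ) := by
      simp only [hadef, hcdef]
      norm_num
    rw [h1, norm_mul, norm_mul, Complex.norm_natCast, Complex.norm_real, Real.norm_eq_abs,
      abs_of_pos hρpos, mul_pow, mul_pow, hρsq]
    push_cast
    ring
  have htail : ∑' k : ℕ, ‖a (k + 1 + 1)‖ ^ 2 ≤ 9/4 - ‖b 1‖ ^ 2 - 4/3 * ‖b 2‖ ^ 2 := by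
    have h := hpar
    rw [hsplit, ha0, ha1] at h
    linarith
  -- per-term bound
  have hak : ∀ k : ℕ, ‖a (k + 1 + 1)‖ ^ 2
      = ((k + 3 : ℕ) : ℝ) ^ 2 * ‖b (k + 3)‖ ^ 2 * (ρ ^ 2) ^ (k + 2) := by
    intro k
    have h1 : a (k + 1 + 1) = ((k + 3 : ℕ) : ℂ) * b (k + 3) * ((ρ:ℝ):ℂ) ^ (k + 2) := by
      simp only [hadef, hcdef]
    rw [h1, norm_mul, norm_mul, Complex.norm_natCast, norm_pow, Complex.norm_real,
      Real.norm_eq_abs, abs_of_pos hρpos]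
    ring
  have hterm : ∀ k : ℕ, ((k + 3 : ℕ) : ℝ) ^ 2 * ‖b (k + 3)‖ ^ 2 * r ^ (2 * (k + 2))
      ≤ 9 * r ^ 4 * ‖a (k + 1 + 1)‖ ^ 2 := by
    intro k
    rw [hak k]
    have hr2 : r ^ 2 ≤ ρ ^ 2 := by nlinarith
    have hkey : r ^ (2 * (k + 2)) ≤ 9 * r ^ 4 * (ρ ^ 2) ^ (k + 2) := by
      have e1 : r ^ (2 * (k + 2)) = r ^ 4 * (r ^ 2) ^ k := by
        rw [pow_mul, pow_add]
        ring
      have e2 : (9:ℝ) * (ρ ^ 2) ^ (k + 2) = (ρ ^ 2) ^ k := by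
        rw [pow_add, hρsq]; ring
      calc r ^ (2 * (k + 2)) = r ^ 4 * (r ^ 2) ^ k := e1
        _ ≤ r ^ 4 * (ρ ^ 2) ^ k := by gcongr
        _ = 9 * r ^ 4 * (ρ ^ 2) ^ (k + 2) := by rw [← e2]; ring
    calc ((k + 3 : ℕ) : ℝ) ^ 2 * ‖b (k + 3)‖ ^ 2 * r ^ (2 * (k + 2))
        ≤ ((k + 3 : ℕ) : ℝ) ^ 2 * ‖b (k + 3)‖ ^ 2 * (9 * r ^ 4 * (ρ ^ 2) ^ (k + 2)) := by
          gcongr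
      _ = 9 * r ^ 4 * (((k + 3 : ℕ) : ℝ) ^ 2 * ‖b (k + 3)‖ ^ 2 * (ρ ^ 2) ^ (k + 2)) := by ring
  have hRsum : Summable fun k : ℕ => 9 * r ^ 4 * ‖a (k + 1 + 1)‖ ^ 2 := hsq2.mul_left _
  have hLsum : Summable fun k : ℕ =>
      ((k + 3 : ℕ) : ℝ) ^ 2 * ‖b (k + 3)‖ ^ 2 * r ^ (2 * (k + 2)) :=
    Summable.of_nonneg_of_le (fun k => by positivity) hterm hRsum
  calc ∑' k : ℕ, ((k + 3 : ℕ) : ℝ) ^ 2 * ‖b (k + 3)‖ ^ 2 * r ^ (2 * (k + 2))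
      ≤ ∑' k : ℕ, 9 * r ^ 4 * ‖a (k + 1 + 1)‖ ^ 2 := Summable.tsum_le_tsum hterm hLsum hRsum
    _ = 9 * r ^ 4 * ∑' k : ℕ, ‖a (k + 1 + 1)‖ ^ 2 := tsum_mul_left
    _ ≤ 9 * r ^ 4 * (9/4 - ‖b 1‖ ^ 2 - 4/3 * ‖b 2‖ ^ 2) :=
        mul_le_mul_of_nonneg_left htail (by positivity)
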